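/- Fix a linear subspace L of the space of symmetric n×n real matrices with orthogonal complement L^⊥ relative to the trace inner product ⟨A,B⟩ = tr(A·B), symmetric matrices X₀, S₀, and μ > 0. Let W and Ŵ be symmetric positive definite with Ŵ ∈ (1/√μ)·X₀ + L and Ŵ⁻¹ ∈ (1/√μ)·S₀ + L^⊥, and let D be symmetric with W^(1/2)·(I + D)·W^(1/2) ∈ (1/√μ)·X₀ + L and W^(-1/2)·(I − D)·W^(-1/2) ∈ (1/√μ)·S₀ + L^⊥. Define f : ℝ → ℝ by f(t) = tr(exp(t·D)·W^(1/2)·Ŵ⁻¹·W^(1/2)) + tr(exp(−t·D)·W^(-1/2)·Ŵ·W^(-1/2)) − 2n. If ‖D‖_∞² ≤ 2, then f(1) ≤ (1/2)·‖D‖_∞²·f(0). -/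

import Mathlib

open Matrix

section
open scoped ComplexOrder

/-- The positive semidefinite square root of a positive semidefinite matrix (the definition
`Matrix.PosSemidef.sqrt` of the older Mathlib, removed since). -/
noncomputable def Matrix.PosSemidef.sqrt {n : Type*} [Fintype n] [DecidableEq n] {𝕜 : Type*}
    [RCLike 𝕜] {A : Matrix n n 𝕜} (hA : A.PosSemidef) : Matrix n n 𝕜 :=
  hA.isHermitian.eigenvectorUnitary.1 * diagonal ((↑) ∘ (√·) ∘ hA.isHermitian.eigenvalues) *
  (star hA.isHermitian.eigenvectorUnitary : Matrix n n 𝕜)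

end

/-- The spectral norm of a real symmetric matrix: the maximum absolute value
of its eigenvalues. -/
noncomputable def specNormInf {n : ℕ} {D : Matrix (Fin n) (Fin n) ℝ}
    (hD : D.IsHermitian) : ℝ :=
  ⨆ i, |hD.eigenvalues i|

section auxiliary


open intervalIntegral in
lemma exp_taylor_int (l : ℝ) :
    Real.exp l = 1 + l + ∫ t in (0:ℝ)..1, (1 - t) * l ^ 2 * Real.exp (t * l) := by
  have key : ∀ t ∈ Set.uIcc (0:ℝ) 1,
      HasDerivAt (fun s => (l + 1 - l * s) * Real.exp (s * l))
        ((1 - t) * l ^ 2 * Real.exp (t * l)) t := by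
    intro t _
    have h1 : HasDerivAt (fun s : ℝ => s * l) l t := by
      simpa using (hasDerivAt_id t).mul_const l
    have h2 : HasDerivAt (fun s : ℝ => Real.exp (s * l)) (Real.exp (t * l) * l) t :=
      (Real.hasDerivAt_exp _).comp t h1
    have h3 : HasDerivAt (fun s : ℝ => l + 1 - l * s) (-l) t := by
      simpa using ((hasDerivAt_id t).const_mul l).const_sub (l + 1)
    have := h3.mul h2
    exact this.congr_deriv (by ring)
  have hint : IntervalIntegrable (fun t => (1 - t) * l ^ 2 * Real.exp (t * l))
      MeasureTheory.volume 0 1 := (by continuity : Continuous _).intervalIntegrable 0 1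
  have := intervalIntegral.integral_eq_sub_of_hasDerivAt key hint
  rw [this]
  simp
  ring


lemma exp_convex_bound {t : ℝ} (l : ℝ) (h0 : 0 ≤ t) (h1 : t ≤ 1) :
    Real.exp (t * l) ≤ (1 - t) + t * Real.exp l := by
  have := convexOn_exp.2 (Set.mem_univ (0:ℝ)) (Set.mem_univ l)
    (by linarith : (0:ℝ) ≤ 1 - t) h0 (by ring)
  simpa using this

lemma amgm_two {x y : ℝ} (hx : 0 < x) (hy : 0 < y) (hxy : 1 ≤ x * y) : 2 ≤ x + y := by
  nlinarith [sq_nonneg (x - y), sq_nonneg (x + y - 2)]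

lemma integral_poly2 (A B C : ℝ) :
    (∫ t in (0:ℝ)..1, (A + B * t + C * t ^ 2)) = A + B / 2 + C / 3 := by
  have key : ∀ t ∈ Set.uIcc (0:ℝ) 1,
      HasDerivAt (fun s => A * s + B * s ^ 2 / 2 + C * s ^ 3 / 3)
        (A + B * t + C * t ^ 2) t := by
    intro t _
    have h1 : HasDerivAt (fun s : ℝ => A * s) A t := by
      simpa using (hasDerivAt_id t).const_mul A
    have h2 : HasDerivAt (fun s : ℝ => B * s ^ 2 / 2) (B * t) t := by
      have := ((hasDerivAt_pow 2 t).const_mul B).div_const 2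
      exact this.congr_deriv (by norm_num; ring)
    have h3 : HasDerivAt (fun s : ℝ => C * s ^ 3 / 3) (C * t ^ 2) t := by
      have := ((hasDerivAt_pow 3 t).const_mul C).div_const 3
      exact this.congr_deriv (by norm_num; ring)
    exact (h1.add h2).add h3
  have hint : IntervalIntegrable (fun t => A + B * t + C * t ^ 2)
      MeasureTheory.volume 0 1 := (by continuity : Continuous _).intervalIntegrable 0 1
  have := intervalIntegral.integral_eq_sub_of_hasDerivAt key hint
  rw [this]
  ring

set_option maxHeartbeats 1000000 in
lemma scalar_key (n : ℕ) (l a b : Fin n → ℝ) (δ2 : ℝ)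
    (ha : ∀ i, 0 < a i) (hb : ∀ i, 0 < b i) (hab : ∀ i, 1 ≤ a i * b i)
    (hl : ∀ i, (l i) ^ 2 ≤ δ2) (hδ0 : 0 ≤ δ2) (hδ : δ2 ≤ 2)
    (hort : (∑ i, (a i + b i)) + (∑ i, l i * (a i - b i))
        = 2 * n - ∑ i, (l i) ^ 2) :
    (∑ i, (a i * Real.exp (l i) + b i * Real.exp (-l i))) - 2 * n
      ≤ 1 / 2 * δ2 * ((∑ i, (a i + b i)) - 2 * n) := by
  set σ : ℝ := ∑ i, (l i) ^ 2 with hσ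
  clear_value σ
  set f0 : ℝ := (∑ i, (a i + b i)) - 2 * n with hf0
  clear_value f0
  set f1 : ℝ := (∑ i, (a i * Real.exp (l i) + b i * Real.exp (-l i))) - 2 * n with hf1
  clear_value f1
  -- the "pair" function
  set p : Fin n → ℝ → ℝ := fun i t => a i * Real.exp (t * l i) + b i * Real.exp (-(t * l i))
    with hp
  clear_value p
  have hppos : ∀ i t, 0 < p i t := fun i t => by
    rw [hp]
    exact add_pos (mul_pos (ha i) (Real.exp_pos _)) (mul_pos (hb i) (Real.exp_pos _))
  have hpair : ∀ i (t : ℝ), 2 ≤ p i t := by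
    intro i t
    rw [hp]
    refine amgm_two (mul_pos (ha i) (Real.exp_pos _)) (mul_pos (hb i) (Real.exp_pos _)) ?_
    have : a i * Real.exp (t * l i) * (b i * Real.exp (-(t * l i))) = a i * b i := by
      rw [mul_mul_mul_comm, ← Real.exp_add]
      simp
    rw [this]; exact hab i
  have hcontp : ∀ i, Continuous fun t => p i t := by
    intro i; simp only [hp]; continuity
  have hcard : (Finset.univ : Finset (Fin n)).card = n := Finset.card_fin n
  have hsum2 : (∑ _i : Fin n, (2:ℝ)) = 2 * n := by
    simp [Finset.sum_const, hcard, mul_comm]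
  -- f0, f1 nonneg
  have hf0nn : 0 ≤ f0 := by
    have : (∑ _i : Fin n, (2:ℝ)) ≤ ∑ i, (a i + b i) := by
      refine Finset.sum_le_sum fun i _ => ?_
      have := hpair i 0; simpa [hp] using this
    rw [hf0]; rw [hsum2] at this; linarith
  have hf1nn : 0 ≤ f1 := by
    have : (∑ _i : Fin n, (2:ℝ)) ≤ ∑ i, (a i * Real.exp (l i) + b i * Real.exp (-l i)) := by
      refine Finset.sum_le_sum fun i _ => ?_
      have := hpair i 1; simpa [hp] using this
    rw [hf1]; rw [hsum2] at this; linarith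
  -- Taylor identity per index
  have hTi : ∀ i : Fin n, a i * Real.exp (l i) + b i * Real.exp (-l i)
      = (a i + b i) + l i * (a i - b i)
        + ∫ t in (0:ℝ)..1, (1 - t) * (l i) ^ 2 * p i t := by
    intro i
    have int1 : IntervalIntegrable (fun t => (1 - t) * (l i) ^ 2 * Real.exp (t * l i))
        MeasureTheory.volume 0 1 := (by continuity : Continuous _).intervalIntegrable 0 1
    have int2 : IntervalIntegrable (fun t => (1 - t) * (l i) ^ 2 * Real.exp (-(t * l i)))
        MeasureTheory.volume 0 1 := (by continuity : Continuous _).intervalIntegrable 0 1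
    have e1 := exp_taylor_int (l i)
    have e2 := exp_taylor_int (-(l i))
    have e2' : Real.exp (-l i) = 1 + (-l i)
        + ∫ t in (0:ℝ)..1, (1 - t) * (l i) ^ 2 * Real.exp (-(t * l i)) := by
      rw [e2]
      congr 1
      refine intervalIntegral.integral_congr fun t _ => ?_
      have : t * -l i = -(t * l i) := by ring
      rw [this]
      ring
    have key : (∫ t in (0:ℝ)..1, (1 - t) * (l i) ^ 2 * p i t)
        = a i * (∫ t in (0:ℝ)..1, (1 - t) * (l i) ^ 2 * Real.exp (t * l i))
          + b i * (∫ t in (0:ℝ)..1, (1 - t) * (l i) ^ 2 * Real.exp (-(t * l i))) := by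
      rw [← intervalIntegral.integral_const_mul, ← intervalIntegral.integral_const_mul,
        ← intervalIntegral.integral_add (int1.const_mul _) (int2.const_mul _)]
      refine intervalIntegral.integral_congr fun t _ => ?_
      simp only [hp]; ring
    rw [key, e1, e2']
    ring
  -- integrability of summed integrand
  have hint_i : ∀ i : Fin n, IntervalIntegrable (fun t => (1 - t) * (l i) ^ 2 * p i t)
      MeasureTheory.volume 0 1 := fun i =>
    (((continuous_const.sub continuous_id).mul continuous_const).mul (hcontp i)).intervalIntegrable 0 1
  have hTsum : ∑ i, (a i * Real.exp (l i) + b i * Real.exp (-l i))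
      = (∑ i, (a i + b i)) + (∑ i, l i * (a i - b i))
        + ∫ t in (0:ℝ)..1, ∑ i, (1 - t) * (l i) ^ 2 * p i t := by
    rw [intervalIntegral.integral_finset_sum (fun i _ => hint_i i),
      ← Finset.sum_add_distrib, ← Finset.sum_add_distrib]
    exact Finset.sum_congr rfl fun i _ => hTi i
  -- pointwise bound on the integrand
  have hG : ∀ t ∈ Set.Icc (0:ℝ) 1, (∑ i, (1 - t) * (l i) ^ 2 * p i t)
      ≤ (1 - t) * (δ2 * ((1 - t) * f0 + t * f1) + 2 * σ) := by
    intro t ht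
    obtain ⟨ht0, ht1⟩ := ht
    have h1t : (0:ℝ) ≤ 1 - t := by linarith
    have step1 : (∑ i, (l i) ^ 2 * p i t) ≤ δ2 * ((∑ i, p i t) - 2 * n) + 2 * σ := by
      have hterm : ∀ i ∈ Finset.univ, (l i) ^ 2 * p i t ≤ δ2 * (p i t - 2) + 2 * (l i) ^ 2 := by
        intro i _
        nlinarith [hl i, hpair i t]
      have hs := Finset.sum_le_sum hterm
      have expand : ∑ i, (δ2 * (p i t - 2) + 2 * (l i) ^ 2)
          = δ2 * ((∑ i, p i t) - 2 * n) + 2 * σ := by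
        rw [Finset.sum_add_distrib, ← Finset.mul_sum, ← Finset.mul_sum,
          Finset.sum_sub_distrib, hsum2, hσ]
      rw [expand] at hs
      exact hs
    have step2 : (∑ i, p i t) - 2 * n ≤ (1 - t) * f0 + t * f1 := by
      have hterm : ∀ i ∈ Finset.univ, p i t
          ≤ (1 - t) * (a i + b i) + t * (a i * Real.exp (l i) + b i * Real.exp (-l i)) := by
        intro i _
        have c1 := exp_convex_bound (l i) ht0 ht1
        have c2 := exp_convex_bound (-(l i)) ht0 ht1
        have harg : -(t * l i) = t * (-l i) := by ring
        simp only [hp]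
        rw [harg]
        have m1 : a i * Real.exp (t * l i) ≤ a i * ((1 - t) + t * Real.exp (l i)) :=
          mul_le_mul_of_nonneg_left c1 (ha i).le
        have m2 : b i * Real.exp (t * -l i) ≤ b i * ((1 - t) + t * Real.exp (-l i)) :=
          mul_le_mul_of_nonneg_left c2 (hb i).le
        nlinarith [m1, m2]
      have hs := Finset.sum_le_sum hterm
      have expand : ∑ i, ((1 - t) * (a i + b i)
            + t * (a i * Real.exp (l i) + b i * Real.exp (-l i)))
          = (1 - t) * (∑ i, (a i + b i))
            + t * (∑ i, (a i * Real.exp (l i) + b i * Real.exp (-l i))) := by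
        rw [Finset.sum_add_distrib, ← Finset.mul_sum, ← Finset.mul_sum]
      rw [expand] at hs
      have e0 : (∑ i, (a i + b i)) = f0 + 2 * n := by rw [hf0]; ring
      have e1 : (∑ i, (a i * Real.exp (l i) + b i * Real.exp (-l i))) = f1 + 2 * n := by
        rw [hf1]; ring
      rw [e0, e1] at hs
      nlinarith [hs]
    have hfac : (∑ i, (1 - t) * (l i) ^ 2 * p i t) = (1 - t) * ∑ i, (l i) ^ 2 * p i t := by
      rw [Finset.mul_sum]
      exact Finset.sum_congr rfl fun i _ => by ring
    rw [hfac]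
    have hmul : δ2 * ((∑ i, p i t) - 2 * n) ≤ δ2 * ((1 - t) * f0 + t * f1) :=
      mul_le_mul_of_nonneg_left step2 hδ0
    have hcomb : (∑ i, (l i) ^ 2 * p i t) ≤ δ2 * ((1 - t) * f0 + t * f1) + 2 * σ := by
      linarith
    exact mul_le_mul_of_nonneg_left hcomb h1t
  -- integrate the bound
  have intSum : IntervalIntegrable (fun t => ∑ i, (1 - t) * (l i) ^ 2 * p i t)
      MeasureTheory.volume 0 1 :=
    (continuous_finset_sum _ fun i _ =>
      ((continuous_const.sub continuous_id).mul continuous_const).mul (hcontp i)).intervalIntegrable 0 1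
  have intRHS : IntervalIntegrable (fun t => (1 - t) * (δ2 * ((1 - t) * f0 + t * f1) + 2 * σ))
      MeasureTheory.volume 0 1 := (by continuity : Continuous _).intervalIntegrable 0 1
  have hIle : (∫ t in (0:ℝ)..1, ∑ i, (1 - t) * (l i) ^ 2 * p i t)
      ≤ ∫ t in (0:ℝ)..1, (1 - t) * (δ2 * ((1 - t) * f0 + t * f1) + 2 * σ) :=
    intervalIntegral.integral_mono_on zero_le_one intSum intRHS hG
  have hIval : (∫ t in (0:ℝ)..1, (1 - t) * (δ2 * ((1 - t) * f0 + t * f1) + 2 * σ))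
      = δ2 * f0 / 3 + δ2 * f1 / 6 + σ := by
    have hfn : (fun t : ℝ => (1 - t) * (δ2 * ((1 - t) * f0 + t * f1) + 2 * σ))
        = fun t => (δ2 * f0 + 2 * σ) + (δ2 * f1 - 2 * (δ2 * f0) - 2 * σ) * t
            + (δ2 * f0 - δ2 * f1) * t ^ 2 := by
      funext t; ring
    rw [hfn, integral_poly2]
    ring
  have hlsum : (∑ i, l i * (a i - b i)) = -σ - f0 := by
    rw [hf0]; linarith [hort]
  have ef1 : f1 = f0 + (∑ i, l i * (a i - b i))
      + ∫ t in (0:ℝ)..1, ∑ i, (1 - t) * (l i) ^ 2 * p i t := by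
    rw [hf1, hf0, hTsum]; ring
  have ef1' : f1 = f0 + (-σ - f0)
      + ∫ t in (0:ℝ)..1, ∑ i, (1 - t) * (l i) ^ 2 * p i t := by
    rw [← hlsum]; exact ef1
  have hmain : f1 ≤ δ2 * f0 / 3 + δ2 * f1 / 6 := by
    linarith [hIle, hIval.le, hIval.ge, ef1']
  have hmul2 : δ2 * f1 ≤ 2 * f1 := mul_le_mul_of_nonneg_right hδ hf1nn
  linarith

section matrixhelpers
variable {m : Type*} [Fintype m] [DecidableEq m]
lemma posDef_conj_lemma {A B : Matrix m m ℝ} (hA : A.PosDef) (hB : IsUnit B) :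
    (Bᴴ * A * B).PosDef := by
  refine posDef_iff_dotProduct_mulVec.mpr ⟨isHermitian_conjTranspose_mul_mul B hA.1, fun x hx => ?_⟩
  have hBx : B *ᵥ x ≠ 0 := by
    intro h
    exact hx (Matrix.mulVec_injective_iff_isUnit.mpr hB (by simpa using h))
  have := hA.dotProduct_mulVec_pos hBx
  have hre : star x ⬝ᵥ ((Bᴴ * A * B) *ᵥ x) = star (B *ᵥ x) ⬝ᵥ (A *ᵥ (B *ᵥ x)) := by
    rw [star_mulVec, ← Matrix.mulVec_mulVec, ← Matrix.mulVec_mulVec,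
      dotProduct_mulVec (star x) (Bᴴ) _, vecMul_conjTranspose, star_star]
  rwa [hre]

lemma Matrix.PosSemidef.posSemidef_sqrt {S : Matrix m m ℝ} (hS : S.PosSemidef) :
    hS.sqrt.PosSemidef := by
  unfold Matrix.PosSemidef.sqrt
  have hd : (diagonal ((↑) ∘ (√·) ∘ hS.isHermitian.eigenvalues) : Matrix m m ℝ).PosSemidef := by
    rw [posSemidef_diagonal_iff]; intro i; simp [Real.sqrt_nonneg]
  have := hd.mul_mul_conjTranspose_same (hS.isHermitian.eigenvectorUnitary : Matrix m m ℝ)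
  rw [← star_eq_conjTranspose] at this
  exact this

lemma Matrix.PosSemidef.sqrt_mul_self {S : Matrix m m ℝ} (hS : S.PosSemidef) :
    hS.sqrt * hS.sqrt = S := by
  have hU : star (hS.isHermitian.eigenvectorUnitary : Matrix m m ℝ) *
      (hS.isHermitian.eigenvectorUnitary : Matrix m m ℝ) = 1 :=
    Matrix.mem_unitaryGroup_iff'.mp hS.isHermitian.eigenvectorUnitary.2
  conv_rhs => rw [hS.isHermitian.spectral_theorem, Unitary.conjStarAlgAut_apply]
  unfold Matrix.PosSemidef.sqrt
  calc _ = (hS.isHermitian.eigenvectorUnitary : Matrix m m ℝ) *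
        (diagonal ((↑) ∘ (√·) ∘ hS.isHermitian.eigenvalues) *
          (star (hS.isHermitian.eigenvectorUnitary : Matrix m m ℝ) *
            (hS.isHermitian.eigenvectorUnitary : Matrix m m ℝ)) *
          diagonal ((↑) ∘ (√·) ∘ hS.isHermitian.eigenvalues)) *
        star (hS.isHermitian.eigenvectorUnitary : Matrix m m ℝ) := by
          simp only [Matrix.mul_assoc]; rfl
    _ = _ := by
      rw [hU, Matrix.mul_one, diagonal_mul_diagonal]
      congr 2
      congr 1
      funext i
      simp [Real.mul_self_sqrt (hS.eigenvalues_nonneg i)]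

lemma posDef_sqrt_of_posDef {S : Matrix m m ℝ} (hS : S.PosDef) :
    (hS.posSemidef.sqrt).PosDef := by
  have hps := hS.posSemidef.posSemidef_sqrt
  have hdet : IsUnit (hS.posSemidef.sqrt).det := by
    have h2 : (hS.posSemidef.sqrt).det * (hS.posSemidef.sqrt).det = S.det := by
      rw [← det_mul, hS.posSemidef.sqrt_mul_self]
    have : (hS.posSemidef.sqrt).det ≠ 0 := by
      intro h
      rw [h, mul_zero] at h2
      exact hS.det_pos.ne' h2.symm
    exact this.isUnit
  refine posDef_iff_dotProduct_mulVec.mpr ⟨hps.1, fun x hx => ?_⟩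
  refine lt_of_le_of_ne ((posSemidef_iff_dotProduct_mulVec.mp hps).2 x) fun h0 => hx ?_
  have hz : hS.posSemidef.sqrt *ᵥ x = 0 := (hps.dotProduct_mulVec_zero_iff x).mp h0.symm
  exact Matrix.mulVec_injective_iff_isUnit.mpr ((isUnit_iff_isUnit_det _).mpr hdet)
    (by simpa using hz)

lemma posDef_diag_pos {S : Matrix m m ℝ} (hS : S.PosDef) (i : m) : 0 < S i i := by
  have h1 : (Pi.single i 1 : m → ℝ) ≠ 0 := by
    intro h
    have := congr_fun h i
    simp at this
  have := hS.dotProduct_mulVec_pos h1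
  simpa [dotProduct, mulVec_single, Pi.single_apply, Finset.sum_ite_eq'] using this

lemma posDef_one_le_diag_mul_inv_diag {S : Matrix m m ℝ} (hS : S.PosDef) (i : m) :
    1 ≤ S i i * S⁻¹ i i := by
  set T := hS.posSemidef.sqrt with hTdef
  have hT : T.PosDef := posDef_sqrt_of_posDef hS
  have hTsymm : ∀ p q, T p q = T q p := by
    intro p q
    have := congr_fun (congr_fun hT.1 p) q
    simpa [conjTranspose_apply] using this.symm
  have hTinvsymm : ∀ p q, T⁻¹ p q = T⁻¹ q p := by
    intro p q
    have h := Matrix.transpose_nonsing_inv T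
    have hTT : Tᵀ = T := by
      ext p q; exact hTsymm q p
    rw [hTT] at h
    have := congr_fun (congr_fun h.symm p) q
    simpa [transpose_apply] using this
  have hTT : T * T = S := hS.posSemidef.sqrt_mul_self
  have hdetT : IsUnit T.det := by
    have h2 : T.det * T.det = S.det := by rw [← det_mul, hTT]
    have : T.det ≠ 0 := fun h => by
      rw [h, mul_zero] at h2; exact hS.det_pos.ne' h2.symm
    exact this.isUnit
  have hSinv : S⁻¹ = T⁻¹ * T⁻¹ := by rw [← hTT, Matrix.mul_inv_rev]
  have hTinv : T * T⁻¹ = 1 := Matrix.mul_nonsing_inv T hdetT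
  have cs := Finset.sum_mul_sq_le_sq_mul_sq Finset.univ (fun j => T j i) (fun j => T⁻¹ j i)
  have h1 : (∑ j, T j i * T⁻¹ j i) = 1 := by
    have : (∑ j, T j i * T⁻¹ j i) = (T * T⁻¹) i i := by
      rw [mul_apply]
      exact Finset.sum_congr rfl fun j _ => by rw [hTsymm j i]
    rw [this, hTinv, one_apply_eq]
  have h2 : (∑ j, (T j i) ^ 2) = S i i := by
    have : (∑ j, (T j i) ^ 2) = (T * T) i i := by
      rw [mul_apply]
      exact Finset.sum_congr rfl fun j _ => by rw [sq, hTsymm j i]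
    rw [this, hTT]
  have h3 : (∑ j, (T⁻¹ j i) ^ 2) = S⁻¹ i i := by
    have : (∑ j, (T⁻¹ j i) ^ 2) = (T⁻¹ * T⁻¹) i i := by
      rw [mul_apply]
      exact Finset.sum_congr rfl fun j _ => by rw [sq, hTinvsymm j i]
    rw [this, ← hSinv]
  rw [h1, h2, h3] at cs
  simpa using cs
end matrixhelpers

end auxiliary

/-- Full Newton step decrease: if `D` is the Newton direction at `(W, μ)`,
`Wc` the scaled centered point, `f t` the divergence between `Wc` and the
geodesic through `W` with direction `D`, and `‖D‖_∞² ≤ 2`, then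
`f 1 ≤ (1/2) ‖D‖_∞² f 0`. -/
theorem full_newton_step_decrease
    (n : ℕ) (hn : 1 ≤ n)
    (L : Submodule ℝ (Matrix (Fin n) (Fin n) ℝ))
    (hL : ∀ A ∈ L, A.IsHermitian)
    (Lp : Submodule ℝ (Matrix (Fin n) (Fin n) ℝ))
    (hLp : ∀ B, B ∈ Lp ↔ (B.IsHermitian ∧ ∀ A ∈ L, (A * B).trace = 0))
    (X₀ S₀ : Matrix (Fin n) (Fin n) ℝ) (hX₀ : X₀.IsHermitian) (hS₀ : S₀.IsHermitian)
    (μ : ℝ) (hμ : 0 < μ)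
    (W Wc : Matrix (Fin n) (Fin n) ℝ) (hW : W.PosDef) (hWc : Wc.PosDef)
    (hWc1 : Wc - (1 / Real.sqrt μ) • X₀ ∈ L)
    (hWc2 : Wc⁻¹ - (1 / Real.sqrt μ) • S₀ ∈ Lp)
    (D : Matrix (Fin n) (Fin n) ℝ) (hD : D.IsHermitian)
    (hD1 : hW.posSemidef.sqrt * (1 + D) * hW.posSemidef.sqrt
            - (1 / Real.sqrt μ) • X₀ ∈ L)
    (hD2 : (hW.posSemidef.sqrt)⁻¹ * (1 - D) * (hW.posSemidef.sqrt)⁻¹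
            - (1 / Real.sqrt μ) • S₀ ∈ Lp)
    (f : ℝ → ℝ)
    (hf : ∀ t : ℝ, f t =
      (NormedSpace.exp (t • D) * (hW.posSemidef.sqrt * Wc⁻¹ * hW.posSemidef.sqrt)).trace +
        (NormedSpace.exp ((-t) • D) *
          ((hW.posSemidef.sqrt)⁻¹ * Wc * (hW.posSemidef.sqrt)⁻¹)).trace - 2 * n)
    (hDsmall : (specNormInf hD) ^ 2 ≤ 2) :
    f 1 ≤ (1 / 2) * (specNormInf hD) ^ 2 * f 0 := by
  -- basic objects
  set R : Matrix (Fin n) (Fin n) ℝ := hW.posSemidef.sqrt with hRdef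
  have hRpd : R.PosDef := posDef_sqrt_of_posDef hW
  have hRH : Rᴴ = R := hRpd.isHermitian
  have hRR : R * R = W := hW.posSemidef.sqrt_mul_self
  have hRdet : IsUnit R.det := (isUnit_iff_isUnit_det R).mp hRpd.isUnit
  have hRinv : R * R⁻¹ = 1 := mul_nonsing_inv R hRdet
  have hRinv' : R⁻¹ * R = 1 := nonsing_inv_mul R hRdet
  clear_value R
  have hWcdet : IsUnit Wc.det := (isUnit_iff_isUnit_det Wc).mp hWc.isUnit
  have hWcinv : Wc * Wc⁻¹ = 1 := mul_nonsing_inv Wc hWcdet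
  have hWcinv' : Wc⁻¹ * Wc = 1 := nonsing_inv_mul Wc hWcdet
  set P : Matrix (Fin n) (Fin n) ℝ := R * Wc⁻¹ * R with hPdef
  set Q : Matrix (Fin n) (Fin n) ℝ := R⁻¹ * Wc * R⁻¹ with hQdef
  clear_value P Q
  have hRinvH : (R⁻¹)ᴴ = R⁻¹ := by rw [conjTranspose_nonsing_inv, hRH]
  have hRinvUnit : IsUnit (R⁻¹) := by
    have : Invertible (R⁻¹) := ⟨R, hRinv, hRinv'⟩
    exact isUnit_of_invertible _
  have hPpd : P.PosDef := by
    have h := posDef_conj_lemma hWc.inv hRpd.isUnit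
    rw [hRH] at h
    rw [hPdef]; exact h
  have hQpd : Q.PosDef := by
    have h := posDef_conj_lemma hWc hRinvUnit
    rw [hRinvH] at h
    rw [hQdef]; exact h
  have hPQ : P * Q = 1 := by
    rw [hPdef, hQdef]
    simp only [Matrix.mul_assoc]
    rw [mul_nonsing_inv_cancel_left _ _ hRdet, nonsing_inv_mul_cancel_left _ _ hWcdet, hRinv]
  -- spectral decomposition of D
  set U : Matrix (Fin n) (Fin n) ℝ := (hD.eigenvectorUnitary : Matrix (Fin n) (Fin n) ℝ)
    with hUdef
  set lam : Fin n → ℝ := hD.eigenvalues with hlamdef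
  have hU1 : star U * U = 1 := Matrix.mem_unitaryGroup_iff'.mp hD.eigenvectorUnitary.2
  have hU2 : U * star U = 1 := Matrix.mem_unitaryGroup_iff.mp hD.eigenvectorUnitary.2
  have hUunit : IsUnit U := by
    have : Invertible U := ⟨star U, hU1, hU2⟩
    exact isUnit_of_invertible _
  have hUinv : U⁻¹ = star U := inv_eq_right_inv hU2
  have hspec : D = U * Matrix.diagonal lam * star U := by
    have h := hD.spectral_theorem
    simpa [RCLike.ofReal_real_eq_id] using h
  have hl2 : ∀ i, (lam i) ^ 2 ≤ (specNormInf hD) ^ 2 := by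
    intro i
    have h1 : |lam i| ≤ specNormInf hD := by
      show |hD.eigenvalues i| ≤ ⨆ j, |hD.eigenvalues j|
      exact le_ciSup (f := fun j => |hD.eigenvalues j|) (Set.Finite.bddAbove (Set.finite_range _)) i
    calc (lam i) ^ 2 = |lam i| ^ 2 := (sq_abs _).symm
      _ ≤ (specNormInf hD) ^ 2 := pow_le_pow_left₀ (abs_nonneg _) h1 2
  clear_value U lam
  -- trace of diagonal times matrix
  have tdiag : ∀ (w : Fin n → ℝ) (N : Matrix (Fin n) (Fin n) ℝ),
      (Matrix.diagonal w * N).trace = ∑ i, w i * N i i := by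
    intro w N
    simp [Matrix.trace, Matrix.diag, Matrix.mul_apply, Matrix.diagonal_apply]
  have tcyc : ∀ (w : Fin n → ℝ) (M : Matrix (Fin n) (Fin n) ℝ),
      (U * Matrix.diagonal w * star U * M).trace = ∑ i, w i * (star U * M * U) i i := by
    intro w M
    have e1 : U * Matrix.diagonal w * star U * M
        = (U * Matrix.diagonal w) * (star U * M) := by
      simp only [Matrix.mul_assoc]
    rw [e1, Matrix.trace_mul_comm]
    have e2 : (star U * M) * (U * Matrix.diagonal w)
        = (star U * M * U) * Matrix.diagonal w := by
      simp only [Matrix.mul_assoc]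
    rw [e2, Matrix.trace_mul_comm, tdiag]
  -- the key formula for traces of exponentials
  have key : ∀ (s : ℝ) (M : Matrix (Fin n) (Fin n) ℝ),
      ((NormedSpace.exp (s • D)) * M).trace
        = ∑ i, Real.exp (s * lam i) * (star U * M * U) i i := by
    intro s M
    have hd : (fun i => s * lam i) = s • lam := rfl
    have h1 : s • D = U * Matrix.diagonal (fun i => s * lam i) * U⁻¹ := by
      rw [hspec, hUinv, hd, Matrix.diagonal_smul, mul_smul_comm, smul_mul_assoc]
    rw [h1, Matrix.exp_conj U _ hUunit, Matrix.exp_diagonal, hUinv]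
    rw [tcyc]
    refine Finset.sum_congr rfl fun i _ => ?_
    rw [Pi.coe_exp, ← Real.exp_eq_exp_ℝ]
  -- conjugated matrices and their diagonals
  set S : Matrix (Fin n) (Fin n) ℝ := star U * P * U with hSdef
  set Sb : Matrix (Fin n) (Fin n) ℝ := star U * Q * U with hSbdef
  have hSpd : S.PosDef := by
    have h := posDef_conj_lemma hPpd hUunit
    rw [hSdef, Matrix.star_eq_conjTranspose]
    exact h
  have hSbpd : Sb.PosDef := by
    have h := posDef_conj_lemma hQpd hUunit
    rw [hSbdef, Matrix.star_eq_conjTranspose]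
    exact h
  have hUcanc : ∀ X : Matrix (Fin n) (Fin n) ℝ, U * (star U * X) = X := fun X => by
    rw [← Matrix.mul_assoc, hU2, one_mul]
  have hSSb : S * Sb = 1 := by
    rw [hSdef, hSbdef]
    simp only [Matrix.mul_assoc]
    rw [hUcanc, ← Matrix.mul_assoc P Q, hPQ, one_mul, hU1]
  have hSbinv : Sb = S⁻¹ := (inv_eq_right_inv hSSb).symm
  set a : Fin n → ℝ := fun i => S i i with hadef
  set b : Fin n → ℝ := fun i => Sb i i with hbdef
  have ha : ∀ i, 0 < a i := fun i => posDef_diag_pos hSpd i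
  have hb : ∀ i, 0 < b i := fun i => posDef_diag_pos hSbpd i
  have hab : ∀ i, 1 ≤ a i * b i := by
    intro i
    have h := posDef_one_le_diag_mul_inv_diag hSpd i
    rw [← hSbinv] at h
    exact h
  -- trace identities
  have htrconj : ∀ M : Matrix (Fin n) (Fin n) ℝ, (star U * M * U).trace = M.trace := by
    intro M
    rw [Matrix.trace_mul_cycle, hU2, one_mul]
  have hTa : P.trace = ∑ i, a i := by
    rw [← htrconj P]
    simp [Matrix.trace, Matrix.diag, hadef, hSdef]
  have hTb : Q.trace = ∑ i, b i := by
    rw [← htrconj Q]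
    simp [Matrix.trace, Matrix.diag, hbdef, hSbdef]
  have gen : ∀ M : Matrix (Fin n) (Fin n) ℝ,
      (D * M).trace = ∑ i, lam i * (star U * M * U) i i := by
    intro M
    rw [hspec]
    exact tcyc lam M
  have htrDP : (D * P).trace = ∑ i, lam i * a i := gen P
  have htrDQ : (D * Q).trace = ∑ i, lam i * b i := gen Q
  have htrDD : (D * D).trace = ∑ i, (lam i) ^ 2 := by
    rw [gen D]
    refine Finset.sum_congr rfl fun i _ => ?_
    have hdg : star U * D * U = Matrix.diagonal lam := by
      rw [hspec]
      simp only [← Matrix.mul_assoc]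
      rw [hU1, one_mul, Matrix.mul_assoc, hU1, mul_one]
    rw [hdg, Matrix.diagonal_apply_eq]
    ring
  -- orthogonality
  have hAmem : R * (1 + D) * R - Wc ∈ L := by
    have h := L.sub_mem hD1 hWc1
    simpa [sub_sub_sub_cancel_right] using h
  have hBmem : R⁻¹ * (1 - D) * R⁻¹ - Wc⁻¹ ∈ Lp := by
    have h := Lp.sub_mem hD2 hWc2
    simpa [sub_sub_sub_cancel_right] using h
  have horto : ((R * (1 + D) * R - Wc) * (R⁻¹ * (1 - D) * R⁻¹ - Wc⁻¹)).trace = 0 :=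
    ((hLp _).1 hBmem).2 _ hAmem
  have hcancR : ∀ X : Matrix (Fin n) (Fin n) ℝ, R * (R⁻¹ * X) = X := fun X => by
    rw [← Matrix.mul_assoc, hRinv, one_mul]
  have T1 : ((R * (1 + D) * R) * (R⁻¹ * (1 - D) * R⁻¹)).trace
      = (n : ℝ) - (D * D).trace := by
    have e : (R * (1 + D) * R) * (R⁻¹ * (1 - D) * R⁻¹)
        = R * ((1 + D) * ((1 - D) * R⁻¹)) := by
      simp only [Matrix.mul_assoc]
      rw [hcancR]
    rw [e, Matrix.trace_mul_comm]
    have e2 : ((1 + D) * ((1 - D) * R⁻¹)) * R = (1 + D) * (1 - D) := by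
      simp only [Matrix.mul_assoc]
      rw [hRinv', mul_one]
    rw [e2]
    have e3 : (1 + D) * (1 - D) = 1 - D * D := by noncomm_ring
    rw [e3, Matrix.trace_sub, Matrix.trace_one]
    simp
  have T2 : ((R * (1 + D) * R) * Wc⁻¹).trace = P.trace + (D * P).trace := by
    have e : (R * (1 + D) * R) * Wc⁻¹ = R * ((1 + D) * (R * Wc⁻¹)) := by
      simp only [Matrix.mul_assoc]
    rw [e, Matrix.trace_mul_comm]
    have e2 : ((1 + D) * (R * Wc⁻¹)) * R = (1 + D) * P := by
      rw [hPdef]; simp only [Matrix.mul_assoc]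
    rw [e2, add_mul, one_mul, Matrix.trace_add]
  have T3 : (Wc * (R⁻¹ * (1 - D) * R⁻¹)).trace = Q.trace - (D * Q).trace := by
    rw [Matrix.trace_mul_comm]
    have e : (R⁻¹ * (1 - D) * R⁻¹) * Wc = R⁻¹ * ((1 - D) * (R⁻¹ * Wc)) := by
      simp only [Matrix.mul_assoc]
    rw [e, Matrix.trace_mul_comm]
    have e2 : ((1 - D) * (R⁻¹ * Wc)) * R⁻¹ = (1 - D) * Q := by
      rw [hQdef]; simp only [Matrix.mul_assoc]
    rw [e2, sub_mul, one_mul, Matrix.trace_sub]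
  have T4 : (Wc * Wc⁻¹).trace = (n : ℝ) := by
    rw [hWcinv, Matrix.trace_one]; simp
  have hexpand : (R * (1 + D) * R - Wc) * (R⁻¹ * (1 - D) * R⁻¹ - Wc⁻¹)
      = (R * (1 + D) * R) * (R⁻¹ * (1 - D) * R⁻¹) - (R * (1 + D) * R) * Wc⁻¹
        - Wc * (R⁻¹ * (1 - D) * R⁻¹) + Wc * Wc⁻¹ := by
    noncomm_ring
  have hident : P.trace + Q.trace + ((D * P).trace - (D * Q).trace)
      = 2 * (n : ℝ) - (D * D).trace := by
    have h := horto
    rw [hexpand, Matrix.trace_add, Matrix.trace_sub, Matrix.trace_sub,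
      T1, T2, T3, T4] at h
    linarith
  -- assemble
  have hort' : (∑ i, (a i + b i)) + (∑ i, lam i * (a i - b i))
      = 2 * (n : ℝ) - ∑ i, (lam i) ^ 2 := by
    have e1 : ∑ i, (a i + b i) = P.trace + Q.trace := by
      rw [hTa, hTb, Finset.sum_add_distrib]
    have e2 : ∑ i, lam i * (a i - b i) = (D * P).trace - (D * Q).trace := by
      rw [htrDP, htrDQ, ← Finset.sum_sub_distrib]
      exact Finset.sum_congr rfl fun i _ => by ring
    rw [e1, e2, ← htrDD]
    exact hident
  have hf1v : f 1 = (∑ i, (a i * Real.exp (lam i) + b i * Real.exp (-lam i))) - 2 * n := by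
    rw [hf 1, key 1 P, key (-1) Q, ← Finset.sum_add_distrib]
    congr 1
    refine Finset.sum_congr rfl fun i _ => ?_
    rw [one_mul, neg_one_mul]
    ring
  have hf0v : f 0 = (∑ i, (a i + b i)) - 2 * n := by
    have hz : ((-0 : ℝ)) = 0 := neg_zero
    rw [hf 0, hz, key 0 P, key 0 Q, ← Finset.sum_add_distrib]
    congr 1
    refine Finset.sum_congr rfl fun i _ => ?_
    rw [zero_mul, Real.exp_zero]
    ring
  rw [hf1v, hf0v]
  exact scalar_key n lam a b (specNormInf hD ^ 2) ha hb hab hl2 (sq_nonneg _) hDsmall hort'
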